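/- Let R be a commutative artinian ring, let (A, E, s) be an artin R-linear extriangulated category, and let (Φ, Q) = ({Φ_1, …, Φ_n}, {Q_1, …, Q_n}) be a minimal projective E-stratifying system. Suppose that for each 1 ≤ i ≤ n the functor Hom_A(Q_i, −) is left exact on the extriangulated category (F(Φ), E|F(Φ), s|F(Φ)). Then the Jordan-Hölder property holds for Φ-filtrations: any two Φ-filtrations of an object M of A have the same length, and for every j the multiplicity of Φ_j among the factors is the same; in particular the factors agree up to isomorphism and permutation. -/

import Mathlib

/-!
Common axiomatic framework: extriangulated categories in the sense of Nakaoka–Palu,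
formalised as a biadditive functor `E` together with a realisation predicate
`IsExtriangle` subject to the axioms (ET1)–(ET4), (ET3)ᵒᵖ, (ET4)ᵒᵖ.
-/

open CategoryTheory CategoryTheory.Limits ZeroObject

attribute [local instance] CategoryTheory.Limits.hasBinaryBiproducts_of_finite_biproducts

universe v u

namespace ExtriPaper

/-- The data underlying an extriangulated category: a biadditive functor `E` and,
for each extension `δ ∈ E(X, A)`, the predicate picking out the pairs of composable
morphisms `A ⟶ B ⟶ X` belonging to the equivalence class `s(δ)`. -/
structure PreExt (C : Type u) [Category.{v} C] [Preadditive C] where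
  E : Cᵒᵖ ⥤ C ⥤ AddCommGrpCat.{v}
  IsExtriangle : ∀ {A B X : C}, (A ⟶ B) → (B ⟶ X) → ↥((E.obj (Opposite.op X)).obj A) → Prop

namespace PreExt

variable {C : Type u} [Category.{v} C] [Preadditive C]
variable (S : PreExt C)

/-- The group `E(X, A)` of extensions of `X` by `A`. -/
abbrev Ext (X A : C) : Type v := ↥((S.E.obj (Opposite.op X)).obj A)

/-- Pushforward `a_* δ` of an extension along `a : A ⟶ A'`. -/
def push {X A A' : C} (a : A ⟶ A') (δ : S.Ext X A) : S.Ext X A' :=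
  (S.E.obj (Opposite.op X)).map a δ

/-- Pullback `c^* δ` of an extension along `c : X' ⟶ X`. -/
def pull {X' X A : C} (c : X' ⟶ X) (δ : S.Ext X A) : S.Ext X' A :=
  (S.E.map c.op).app A δ

section Axioms

variable [HasZeroObject C] [HasFiniteBiproducts C]

/-- The direct sum `δ ⊕ δ'` of two extensions. -/
noncomputable def sumExt {X X' A A' : C} (δ : S.Ext X A) (δ' : S.Ext X' A') :
    S.Ext (X ⊞ X') (A ⊞ A') :=
  S.push biprod.inl (S.pull biprod.fst δ) + S.push biprod.inr (S.pull biprod.snd δ')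

/-- The axioms of an extriangulated category (Nakaoka–Palu): `E` is biadditive,
`s` (encoded by `IsExtriangle`) is an additive realisation defined on equivalence
classes, and the axioms (ET3), (ET3)ᵒᵖ, (ET4), (ET4)ᵒᵖ hold. -/
structure IsET : Prop where
  /-- Biadditivity of `E` in the covariant variable. -/
  push_add : ∀ {X A A' : C} (a b : A ⟶ A') (δ : S.Ext X A),
      S.push (a + b) δ = S.push a δ + S.push b δ
  /-- Biadditivity of `E` in the contravariant variable. -/
  pull_add : ∀ {X X' A : C} (c d : X' ⟶ X) (δ : S.Ext X A),
      S.pull (c + d) δ = S.pull c δ + S.pull d δ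
  /-- Every extension is realised by a pair of composable morphisms. -/
  realize_exists : ∀ {A X : C} (δ : S.Ext X A),
      ∃ (B : C) (f : A ⟶ B) (g : B ⟶ X), S.IsExtriangle f g δ
  /-- The realisation is closed under equivalence of pairs of composable morphisms. -/
  realize_iso : ∀ {A B B' X : C} {f : A ⟶ B} {g : B ⟶ X} {δ : S.Ext X A} (e : B ≅ B'),
      S.IsExtriangle f g δ → S.IsExtriangle (f ≫ e.hom) (e.inv ≫ g) δ
  /-- Any two realisations of the same extension are equivalent. -/
  realize_unique : ∀ {A B B' X : C} {f : A ⟶ B} {g : B ⟶ X} {f' : A ⟶ B'} {g' : B' ⟶ X}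
      {δ : S.Ext X A}, S.IsExtriangle f g δ → S.IsExtriangle f' g' δ →
      ∃ e : B ≅ B', f ≫ e.hom = f' ∧ e.hom ≫ g' = g
  /-- Morphisms of extensions lift to morphisms of extriangles. -/
  realize_map : ∀ {A B X A' B' X' : C} {f : A ⟶ B} {g : B ⟶ X} {δ : S.Ext X A}
      {f' : A' ⟶ B'} {g' : B' ⟶ X'} {δ' : S.Ext X' A'},
      S.IsExtriangle f g δ → S.IsExtriangle f' g' δ' →
      ∀ (a : A ⟶ A') (c : X ⟶ X'), S.push a δ = S.pull c δ' →
      ∃ b : B ⟶ B', f ≫ b = a ≫ f' ∧ b ≫ g' = g ≫ c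
  /-- The zero extension is realised by the split pair. -/
  realize_zero : ∀ (A X : C),
      S.IsExtriangle (biprod.inl : A ⟶ A ⊞ X) (biprod.snd : A ⊞ X ⟶ X) (0 : S.Ext X A)
  /-- The realisation is additive. -/
  realize_sum : ∀ {A B X A' B' X' : C} {f : A ⟶ B} {g : B ⟶ X} {δ : S.Ext X A}
      {f' : A' ⟶ B'} {g' : B' ⟶ X'} {δ' : S.Ext X' A'},
      S.IsExtriangle f g δ → S.IsExtriangle f' g' δ' →
      S.IsExtriangle (biprod.map f f') (biprod.map g g') (S.sumExt δ δ')
  /-- Axiom (ET3). -/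
  et3 : ∀ {A B X A' B' X' : C} {f : A ⟶ B} {g : B ⟶ X} {δ : S.Ext X A}
      {f' : A' ⟶ B'} {g' : B' ⟶ X'} {δ' : S.Ext X' A'},
      S.IsExtriangle f g δ → S.IsExtriangle f' g' δ' →
      ∀ (a : A ⟶ A') (b : B ⟶ B'), f ≫ b = a ≫ f' →
      ∃ c : X ⟶ X', g ≫ c = b ≫ g' ∧ S.push a δ = S.pull c δ'
  /-- Axiom (ET3)ᵒᵖ. -/
  et3op : ∀ {A B X A' B' X' : C} {f : A ⟶ B} {g : B ⟶ X} {δ : S.Ext X A}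
      {f' : A' ⟶ B'} {g' : B' ⟶ X'} {δ' : S.Ext X' A'},
      S.IsExtriangle f g δ → S.IsExtriangle f' g' δ' →
      ∀ (b : B ⟶ B') (c : X ⟶ X'), g ≫ c = b ≫ g' →
      ∃ a : A ⟶ A', f ≫ b = a ≫ f' ∧ S.push a δ = S.pull c δ'
  /-- Axiom (ET4). -/
  et4 : ∀ {A B D F G : C} {f : A ⟶ B} {f' : B ⟶ D} {δ : S.Ext D A}
      {g : B ⟶ G} {g' : G ⟶ F} {δ' : S.Ext F B},
      S.IsExtriangle f f' δ → S.IsExtriangle g g' δ' →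
      ∃ (E₀ : C) (h : G ⟶ E₀) (d : D ⟶ E₀) (e : E₀ ⟶ F) (δ'' : S.Ext E₀ A),
        S.IsExtriangle (f ≫ g) h δ'' ∧
        S.IsExtriangle d e (S.push f' δ') ∧
        S.pull d δ'' = δ ∧
        S.push f δ'' = S.pull e δ' ∧
        f' ≫ d = g ≫ h ∧ h ≫ e = g'
  /-- Axiom (ET4)ᵒᵖ. -/
  et4op : ∀ {D B A F G : C} {p : D ⟶ B} {f₁ : B ⟶ A} {δ₁ : S.Ext A D}
      {q : F ⟶ G} {g₁ : G ⟶ B} {δ₁' : S.Ext B F},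
      S.IsExtriangle p f₁ δ₁ → S.IsExtriangle q g₁ δ₁' →
      ∃ (E₀ : C) (h : E₀ ⟶ G) (d : E₀ ⟶ D) (e : F ⟶ E₀) (δ'' : S.Ext A E₀),
        S.IsExtriangle h (g₁ ≫ f₁) δ'' ∧
        S.IsExtriangle e d (S.pull p δ₁') ∧
        S.push d δ'' = δ₁ ∧
        S.pull f₁ δ'' = S.push e δ₁' ∧
        d ≫ p = h ≫ g₁ ∧ e ≫ h = q

end Axioms

/-- A morphism is an inflation if it occurs as the first morphism of an extriangle. -/
def IsInflation {A B : C} (f : A ⟶ B) : Prop :=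
  ∃ (X : C) (g : B ⟶ X) (δ : S.Ext X A), S.IsExtriangle f g δ

/-- A morphism is a deflation if it occurs as the second morphism of an extriangle. -/
def IsDeflation {B X : C} (g : B ⟶ X) : Prop :=
  ∃ (A : C) (f : A ⟶ B) (δ : S.Ext X A), S.IsExtriangle f g δ

/-- An isomorphism of extriangles: a triple of isomorphisms compatible with the
structure morphisms and identifying the two extensions. -/
def TriIso {A B X A' B' X' : C} (f : A ⟶ B) (g : B ⟶ X) (δ : S.Ext X A)
    (f' : A' ⟶ B') (g' : B' ⟶ X') (δ' : S.Ext X' A') : Prop :=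
  ∃ (iA : A ≅ A') (iB : B ≅ B') (iX : X ≅ X'),
    f ≫ iB.hom = iA.hom ≫ f' ∧ g ≫ iX.hom = iB.hom ≫ g' ∧
    S.push iA.hom δ = S.pull iX.hom δ'

/-- A chain of `t` composable extriangles: inflations `obj i ⟶ obj (i+1)` each fitting
in an extriangle with cone `factor i`.  This underlies filtrations, inflation series
and composition series alike. -/
structure FChain (t : ℕ) where
  obj : Fin (t + 1) → C
  factor : Fin t → C
  f : ∀ i : Fin t, obj i.castSucc ⟶ obj i.succ
  g : ∀ i : Fin t, obj i.succ ⟶ factor i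
  δ : ∀ i : Fin t, S.Ext (factor i) (obj i.castSucc)
  ext : ∀ i : Fin t, S.IsExtriangle (f i) (g i) (δ i)

/-- The composite `obj 0 ⟶ obj i` of the morphisms of a chain. -/
def FChain.comp {t : ℕ} (c : S.FChain t) : ∀ i : Fin (t + 1), c.obj 0 ⟶ c.obj i :=
  Fin.induction (𝟙 _) (fun i ih => ih ≫ c.f i)

/-- The subcategory `F(P)` of objects admitting a filtration with factors in `P`. -/
def Filt (P : Set C) : Set C :=
  {M | ∃ (t : ℕ) (c : S.FChain t), IsZero (c.obj 0) ∧ c.obj (Fin.last t) = M ∧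
      ∀ i, c.factor i ∈ P}

/-- An `(E, s)`-simple object: a non-zero object `M` such that in every extriangle
`A →a M → X ⇢` the inflation `a` is zero or an isomorphism. -/
def SSimple (M : C) : Prop :=
  ¬ IsZero M ∧ ∀ (A X : C) (a : A ⟶ M) (g : M ⟶ X) (δ : S.Ext X A),
    S.IsExtriangle a g δ → a = 0 ∨ IsIso a

/-- The zero objects of `C` are `(E, s)`-simple-like. -/
def ZeroSimpleLike : Prop :=
  ∀ (A Z X : C) (f : A ⟶ Z) (g : Z ⟶ X) (δ : S.Ext X A),
    IsZero Z → S.IsExtriangle f g δ → IsZero A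

/-- `c` is an `(E, s)`-composition series of `M`. -/
def IsCompSeries {t : ℕ} (c : S.FChain t) (M : C) : Prop :=
  IsZero (c.obj 0) ∧ c.obj (Fin.last t) = M ∧ ∀ i, S.SSimple (c.factor i)

/-- `(A, E, s)` is a length extriangulated category. -/
def LengthCat : Prop :=
  ∀ M : C, (∃ (t : ℕ) (c : S.FChain t), S.IsCompSeries c M) ∧
    ∃ N : ℕ, ∀ (t : ℕ) (c : S.FChain t), S.IsCompSeries c M → t ≤ N

/-- `(A, E, s)` is a Jordan–Hölder extriangulated category: any two composition series
of an object have the same length and, up to a permutation, isomorphic simple factors. -/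
def JordanHolder : Prop :=
  ∀ (M : C) (t t' : ℕ) (c : S.FChain t) (c' : S.FChain t'),
    S.IsCompSeries c M → S.IsCompSeries c' M →
    ∃ e : Fin t ≃ Fin t', ∀ i, Nonempty (c.factor i ≅ c'.factor (e i))

/-- `c` is an `(E, s)`-inflation series of `B`: a filtration of `B` with non-zero factors. -/
def IsInflSeries {t : ℕ} (c : S.FChain t) (B : C) : Prop :=
  IsZero (c.obj 0) ∧ c.obj (Fin.last t) = B ∧ ∀ i, ¬ IsZero (c.factor i)

/-- `X` and `Y` admit isomorphic `(E, s)`-inflation series. -/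
def HaveIsoInflSeries (X Y : C) : Prop :=
  ∃ (t : ℕ) (c d : S.FChain t), S.IsInflSeries c X ∧ S.IsInflSeries d Y ∧
    ∃ e : Equiv.Perm (Fin t), ∀ i, Nonempty (c.factor i ≅ d.factor (e i))

/-- Simplicity of `M` with respect to the extriangulated structure restricted to the
extension-closed subcategory `𝒮`: extriangles of the restricted structure are exactly
the ambient extriangles all of whose terms lie in `𝒮`. -/
def SimpleIn (𝒮 : Set C) (M : C) : Prop :=
  M ∈ 𝒮 ∧ ¬ IsZero M ∧ ∀ (A X : C) (a : A ⟶ M) (g : M ⟶ X) (δ : S.Ext X A),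
    A ∈ 𝒮 → X ∈ 𝒮 → S.IsExtriangle a g δ → a = 0 ∨ IsIso a

/-- `c` is a composition series of `M` in the extriangulated structure restricted to `𝒮`. -/
def IsCompSeriesIn (𝒮 : Set C) {t : ℕ} (c : S.FChain t) (M : C) : Prop :=
  IsZero (c.obj 0) ∧ c.obj (Fin.last t) = M ∧ (∀ i, c.obj i ∈ 𝒮) ∧
    ∀ i, S.SimpleIn 𝒮 (c.factor i)

section Star

variable [HasZeroObject C] [HasFiniteBiproducts C]

/-- The subcategory `P ∗ Q` of objects `Z` admitting an extriangle `X → Z → Y ⇢`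
with `X ∈ P` and `Y ∈ Q`. -/
def star (P Q : Set C) : Set C :=
  {Z | ∃ (X Y : C) (f : X ⟶ Z) (g : Z ⟶ Y) (δ : S.Ext Y X),
      X ∈ P ∧ Y ∈ Q ∧ S.IsExtriangle f g δ}

/-- Iterated `∗` of a list of subcategories (the empty `∗` being the zero objects). -/
def starMany : List (Set C) → Set C
  | [] => {Z | IsZero Z}
  | P :: l => S.star P (starMany l)

end Star

/-- The relative projectives `P(P) = {Z : E(Z, Y) = 0 for all Y ∈ F(P)}`. -/
def projSet (P : Set C) : Set C :=
  {Z | ∀ Y ∈ S.Filt P, ∀ δ : S.Ext Z Y, δ = 0}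

/-- `Hom(W, −)` is left exact on the extriangulated structure restricted to `𝒮`:
for every extriangle `A →a B → X ⇢` with all terms in `𝒮`, composition with `a`
is injective on morphisms from `W`. -/
def HomLeftExactOn (W : C) (𝒮 : Set C) : Prop :=
  ∀ (A B X : C) (a : A ⟶ B) (g : B ⟶ X) (δ : S.Ext X A),
    A ∈ 𝒮 → B ∈ 𝒮 → X ∈ 𝒮 → S.IsExtriangle a g δ →
    ∀ φ ψ : W ⟶ A, φ ≫ a = ψ ≫ a → φ = ψ

/-- The subset of the free abelian group on objects consisting of the defining
relations of the Grothendieck group `K₀(A, E, s)`. -/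
def K0Rels : Set (FreeAbelianGroup C) :=
  {x | ∃ (A B X : C) (f : A ⟶ B) (g : B ⟶ X) (δ : S.Ext X A), S.IsExtriangle f g δ ∧
      x = FreeAbelianGroup.of A + FreeAbelianGroup.of X - FreeAbelianGroup.of B} ∪
  {x | ∃ (X Y : C) (_ : X ≅ Y), x = FreeAbelianGroup.of X - FreeAbelianGroup.of Y}

/-- `[M] = [M']` in the Grothendieck group `K₀(A, E, s)`, the quotient of the free
abelian group on (isomorphism classes of) objects by the extriangle relations. -/
def GrpRel (M M' : C) : Prop :=
  FreeAbelianGroup.of M - FreeAbelianGroup.of M' ∈ AddSubgroup.closure S.K0Rels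

end PreExt

/-- The congruence defining the Grothendieck monoid: `MonRel S M M'` holds if and only
if `[M] = [M']` in the Grothendieck monoid `M(A, E, s)`, the quotient of the monoid of
isomorphism classes of objects (under `⊞`) by the congruence generated by
`[B] ∼ [A] + [X]` for each extriangle `A → B → X ⇢`. -/
inductive MonRel {C : Type u} [Category.{v} C] [Preadditive C] [HasZeroObject C]
    [HasFiniteBiproducts C] (S : PreExt C) : C → C → Prop
  | of {A B X : C} {f : A ⟶ B} {g : B ⟶ X} {δ : S.Ext X A}
      (h : S.IsExtriangle f g δ) : MonRel S B (A ⊞ X)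
  | iso {X Y : C} (e : X ≅ Y) : MonRel S X Y
  | symm {X Y : C} : MonRel S X Y → MonRel S Y X
  | trans {X Y Z : C} : MonRel S X Y → MonRel S Y Z → MonRel S X Z
  | add {X Y : C} (Z : C) : MonRel S X Y → MonRel S (X ⊞ Z) (Y ⊞ Z)

/-- `[M]` is an atom of the Grothendieck monoid `M(A, E, s)`. -/
def IsAtomClass {C : Type u} [Category.{v} C] [Preadditive C] [HasZeroObject C]
    [HasFiniteBiproducts C] (S : PreExt C) (M : C) : Prop :=
  ¬ MonRel S M 0 ∧ ∀ X Y : C, MonRel S M (X ⊞ Y) → MonRel S X 0 ∨ MonRel S Y 0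

/-- An additive category is weakly idempotent complete if every retraction admits a kernel. -/
def WeaklyIdemComplete (C : Type u) [Category.{v} C] [Preadditive C] : Prop :=
  ∀ (X Y : C) (r : X ⟶ Y), IsSplitEpi r → HasKernel r

/-- A set of objects is closed under direct summands. -/
def ClosedSummands {C : Type u} [Category.{v} C] [Preadditive C] [HasZeroObject C]
    [HasFiniteBiproducts C] (P : Set C) : Prop :=
  ∀ (X Y Z : C), Z ∈ P → Nonempty (Z ≅ X ⊞ Y) → X ∈ P

/-- A Krull–Schmidt category: every object is a finite biproduct of objects having
local endomorphism rings. -/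
def KrullSchmidtCat (C : Type u) [Category.{v} C] [Preadditive C] [HasZeroObject C]
    [HasFiniteBiproducts C] : Prop :=
  ∀ X : C, ∃ (n : ℕ) (Y : Fin n → C),
    (∀ i, IsLocalRing (End (Y i))) ∧ Nonempty (X ≅ ⨁ Y)

/-- The closure `add Ψ` of a set of objects under finite direct sums and isomorphisms. -/
def addSet {C : Type u} [Category.{v} C] [Preadditive C] [HasZeroObject C]
    [HasFiniteBiproducts C] (P : Set C) : Set C :=
  {X | ∃ (m : ℕ) (f : Fin m → C), (∀ k, f k ∈ P) ∧ Nonempty (X ≅ ⨁ f)}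

/-- An indecomposable object. -/
def Indec {C : Type u} [Category.{v} C] [Preadditive C] [HasZeroObject C]
    [HasFiniteBiproducts C] (X : C) : Prop :=
  ¬ IsZero X ∧ ∀ (Y Z : C), Nonempty (X ≅ Y ⊞ Z) → IsZero Y ∨ IsZero Z

/-- A morphism `q` is right minimal. -/
def RightMinimal {C : Type u} [Category.{v} C] {X Y : C} (q : X ⟶ Y) : Prop :=
  ∀ g : X ⟶ X, g ≫ q = q → IsIso g

/-- The extra structure making an extriangulated category into an artin `R`-linear
extriangulated category: an `R`-module structure on each `E(X, A)` for which `E` is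
`R`-bilinear, with all Hom-sets and all `E(X, A)` of finite length over `R`. -/
structure ArtinLinear {C : Type u} [Category.{v} C] [Preadditive C]
    (R : Type*) [CommRing R] [CategoryTheory.Linear R C] (S : PreExt C) where
  module : ∀ X A : C, Module R (S.Ext X A)
  push_smul : ∀ {X A A' : C} (r : R) (a : A ⟶ A') (δ : S.Ext X A),
      S.push (r • a) δ = letI := module X A'; r • S.push a δ
  pull_smul : ∀ {X' X A : C} (r : R) (c : X' ⟶ X) (δ : S.Ext X A),
      S.pull (r • c) δ = letI := module X' A; r • S.pull c δ
  homFinite : ∀ X Y : C, IsFiniteLength R (X ⟶ Y)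
  extFinite : ∀ X A : C, letI := module X A; IsFiniteLength R (S.Ext X A)

/-- An `E`-stratifying system: a finite family of indecomposable objects subject to
the orthogonality axioms (S1) and (S2). -/
structure IsStratSys {C : Type u} [Category.{v} C] [Preadditive C] [HasZeroObject C]
    [HasFiniteBiproducts C] (S : PreExt C) {n : ℕ} (Φ : Fin n → C) : Prop where
  indec : ∀ i, Indec (Φ i)
  s1 : ∀ i j : Fin n, i < j → ∀ φ : Φ j ⟶ Φ i, φ = 0
  s2 : ∀ i j : Fin n, i ≤ j → ∀ δ : S.Ext (Φ j) (Φ i), δ = 0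

/-- The data of extriangles `K i → Q i → Φ i ⇢η i` with `K i ∈ F(Φ_{j>i})`, as in
axiom (PS2) of a projective `E`-stratifying system. -/
structure ProjData {C : Type u} [Category.{v} C] [Preadditive C]
    (S : PreExt C) {n : ℕ} (Φ Q : Fin n → C) where
  K : Fin n → C
  k : ∀ i, K i ⟶ Q i
  q : ∀ i, Q i ⟶ Φ i
  η : ∀ i, S.Ext (Φ i) (K i)
  ext : ∀ i, S.IsExtriangle (k i) (q i) (η i)
  kmem : ∀ i, K i ∈ S.Filt (Φ '' {j | i < j})

/-- `(Φ, Q)` is a projective `E`-stratifying system. -/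
def IsProjSS {C : Type u} [Category.{v} C] [Preadditive C] [HasZeroObject C]
    [HasFiniteBiproducts C] (S : PreExt C) {n : ℕ} (Φ Q : Fin n → C) : Prop :=
  IsStratSys S Φ ∧ (∀ i j : Fin n, ∀ δ : S.Ext (Q i) (Φ j), δ = 0) ∧
    Nonempty (ProjData S Φ Q)

/-- `(Φ, Q)` is a minimal projective `E`-stratifying system: the morphisms `q i` of
the extriangles witnessing (PS2) may be chosen right minimal. -/
def IsMinProjSS {C : Type u} [Category.{v} C] [Preadditive C] [HasZeroObject C]
    [HasFiniteBiproducts C] (S : PreExt C) {n : ℕ} (Φ Q : Fin n → C) : Prop :=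
  IsStratSys S Φ ∧ (∀ i j : Fin n, ∀ δ : S.Ext (Q i) (Φ j), δ = 0) ∧
    ∃ d : ProjData S Φ Q, ∀ i, RightMinimal (d.q i)

/-! ### Auxiliary: length of finite-length modules -/

section Flen

variable {R₀ : Type*} [CommRing R₀]

noncomputable def flen (R₀ : Type*) [CommRing R₀] (M : Type*) [AddCommGroup M] [Module R₀ M]
    (h : IsFiniteLength R₀ M) : ℕ :=
  (isFiniteLength_iff_exists_compositionSeries.mp h).choose.length

lemma flen_eq {M : Type*} [AddCommGroup M] [Module R₀ M] (h : IsFiniteLength R₀ M)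
    (s : CompositionSeries (Submodule R₀ M)) (hh : s.head = ⊥) (hl : s.last = ⊤) :
    s.length = flen R₀ M h := by
  obtain ⟨hh', hl'⟩ := (isFiniteLength_iff_exists_compositionSeries.mp h).choose_spec
  exact (CompositionSeries.jordan_holder s _ (hh.trans hh'.symm) (hl.trans hl'.symm)).length_eq

lemma flen_zero {M : Type*} [AddCommGroup M] [Module R₀ M] (h : IsFiniteLength R₀ M)
    (hs : Subsingleton M) : flen R₀ M h = 0 := by
  have hbt : (⊥ : Submodule R₀ M) = ⊤ := by
    ext x; simp [show x = 0 from Subsingleton.elim x 0]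
  exact (flen_eq h (RelSeries.singleton _ ⊥) rfl hbt).symm

lemma flen_pos {M : Type*} [AddCommGroup M] [Module R₀ M] (h : IsFiniteLength R₀ M)
    (hs : Nontrivial M) : 0 < flen R₀ M h := by
  by_contra hn
  obtain ⟨hh', hl'⟩ := (isFiniteLength_iff_exists_compositionSeries.mp h).choose_spec
  set s := (isFiniteLength_iff_exists_compositionSeries.mp h).choose
  have hdef : s.length = flen R₀ M h := rfl
  have hlen : s.length = 0 := by omega
  have : s.head = s.last := by
    show s 0 = s (Fin.last _)
    congr 1
    omega
  have hbt : (⊥ : Submodule R₀ M) = ⊤ := hh' ▸ hl' ▸ this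
  obtain ⟨x, y, hxy⟩ := hs
  have hx : x = 0 := by simpa using (hbt ▸ Submodule.mem_top : x ∈ (⊥ : Submodule R₀ M))
  have hy : y = 0 := by simpa using (hbt ▸ Submodule.mem_top : y ∈ (⊥ : Submodule R₀ M))
  exact hxy (hx.trans hy.symm)

lemma covBy_map_flen {M N : Type*} [AddCommGroup M] [Module R₀ M] [AddCommGroup N] [Module R₀ N]
    (f : M →ₗ[R₀] N) (hf : Function.Injective f) {p q : Submodule R₀ M} (h : p ⋖ q) :
    p.map f ⋖ q.map f := by
  constructor
  · exact Submodule.map_strictMono_of_injective hf h.lt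
  · intro c h1 h2
    have hcr : c ≤ LinearMap.range f :=
      h2.le.trans (by rw [← Submodule.map_top f]; exact Submodule.map_mono le_top)
    have hmc : Submodule.map f (Submodule.comap f c) = c := by
      rw [Submodule.map_comap_eq, inf_eq_right.mpr hcr]
    have h1' : p < Submodule.comap f c :=
      lt_of_le_of_ne (Submodule.map_le_iff_le_comap.mp h1.le)
        (fun e => h1.ne (by rw [e, hmc]))
    have h2' : Submodule.comap f c < q :=
      lt_of_le_of_ne
        (by rw [← Submodule.comap_map_eq_of_injective hf q]; exact Submodule.comap_mono h2.le)
        (fun e => h2.ne (by rw [← hmc, e]))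
    exact h.2 h1' h2'

lemma covBy_comap_flen {N P : Type*} [AddCommGroup N] [Module R₀ N] [AddCommGroup P] [Module R₀ P]
    (g : N →ₗ[R₀] P) (hg : Function.Surjective g) {p q : Submodule R₀ P} (h : p ⋖ q) :
    p.comap g ⋖ q.comap g := by
  constructor
  · exact Submodule.comap_strictMono_of_surjective hg h.lt
  · intro c h1 h2
    have hker : LinearMap.ker g ≤ c :=
      le_trans (Submodule.comap_mono bot_le) h1.le
    have hcm : Submodule.comap g (Submodule.map g c) = c := by
      rw [Submodule.comap_map_eq, sup_eq_left.mpr hker]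
    have h1' : p < Submodule.map g c :=
      lt_of_le_of_ne
        (by rw [← Submodule.map_comap_eq_of_surjective hg p]; exact Submodule.map_mono h1.le)
        (fun e => h1.ne (by rw [e, hcm]))
    have h2' : Submodule.map g c < q :=
      lt_of_le_of_ne
        (by rw [← Submodule.map_comap_eq_of_surjective hg q]; exact Submodule.map_mono h2.le)
        (fun e => h2.ne (by rw [← hcm, e]))
    exact h.2 h1' h2'

theorem flen_add {M N P : Type*} [AddCommGroup M] [Module R₀ M] [AddCommGroup N] [Module R₀ N]
    [AddCommGroup P] [Module R₀ P] (f : M →ₗ[R₀] N) (g : N →ₗ[R₀] P)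
    (hf : Function.Injective f) (hg : Function.Surjective g) (hfg : Function.Exact f g)
    (hM : IsFiniteLength R₀ M) (hN : IsFiniteLength R₀ N) (hP : IsFiniteLength R₀ P) :
    flen R₀ N hN = flen R₀ M hM + flen R₀ P hP := by
  obtain ⟨sM, hMh, hMl⟩ := isFiniteLength_iff_exists_compositionSeries.mp hM
  obtain ⟨sP, hPh, hPl⟩ := isFiniteLength_iff_exists_compositionSeries.mp hP
  let sM' : CompositionSeries (Submodule R₀ N) :=
    ⟨sM.length, fun i => (sM i).map f, fun i => covBy_map_flen f hf (sM.step i)⟩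
  let sP' : CompositionSeries (Submodule R₀ N) :=
    ⟨sP.length, fun i => (sP i).comap g, fun i => covBy_comap_flen g hg (sP.step i)⟩
  have hconn : sM'.last = sP'.head := by
    show (sM (Fin.last _)).map f = (sP 0).comap g
    rw [show sM (Fin.last _) = ⊤ from hMl, show sP 0 = ⊥ from hPh,
      Submodule.map_top, Submodule.comap_bot, LinearMap.exact_iff.mp hfg]
  have key : (sM'.smash sP' hconn).length = flen R₀ N hN := by
    apply flen_eq
    · rw [RelSeries.head_smash]
      show (sM 0).map f = ⊥
      rw [show sM 0 = ⊥ from hMh, Submodule.map_bot]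
    · rw [RelSeries.last_smash]
      show (sP (Fin.last _)).comap g = ⊤
      rw [show sP (Fin.last _) = ⊤ from hPl, Submodule.comap_top]
  rw [← key, ← flen_eq hM sM hMh hMl, ← flen_eq hP sP hPh hPl]
  rfl

end Flen


/-! ### Auxiliary lemmas on extriangulated categories -/

section ETLemmas

set_option linter.unusedSectionVars false

variable {C : Type u} [Category.{v} C] [Preadditive C] [HasZeroObject C] [HasFiniteBiproducts C]
variable {S : PreExt C}

lemma push_id {X A : C} (δ : S.Ext X A) : S.push (𝟙 A) δ = δ := by
  simp [PreExt.push]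

lemma push_comp' {X A A' A'' : C} (a : A ⟶ A') (b : A' ⟶ A'') (δ : S.Ext X A) :
    S.push (a ≫ b) δ = S.push b (S.push a δ) := by
  simp [PreExt.push]

lemma pull_id {X A : C} (δ : S.Ext X A) : S.pull (𝟙 X) δ = δ := by
  simp [PreExt.pull]

lemma pull_comp' {X'' X' X A : C} (c : X'' ⟶ X') (d : X' ⟶ X) (δ : S.Ext X A) :
    S.pull (c ≫ d) δ = S.pull c (S.pull d δ) := by
  simp [PreExt.pull]

lemma push_pull {X' X A A' : C} (a : A ⟶ A') (c : X' ⟶ X) (δ : S.Ext X A) :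
    S.push a (S.pull c δ) = S.pull c (S.push a δ) :=
  (ConcreteCategory.congr_hom ((S.E.map c.op).naturality a) δ).symm

lemma push_ext_zero {X A A' : C} (a : A ⟶ A') : S.push a (0 : S.Ext X A) = 0 :=
  map_zero (show (↥((S.E.obj (Opposite.op X)).obj A) →+ ↥((S.E.obj (Opposite.op X)).obj A'))
    from ((S.E.obj (Opposite.op X)).map a).hom)

lemma pull_ext_zero {X' X A : C} (c : X' ⟶ X) : S.pull c (0 : S.Ext X A) = 0 :=
  map_zero (show (↥((S.E.obj (Opposite.op X)).obj A) →+ ↥((S.E.obj (Opposite.op X')).obj A))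
    from ((S.E.map c.op).app A).hom)

lemma push_zero_mor (hS : S.IsET) {X A A' : C} (δ : S.Ext X A) :
    S.push (0 : A ⟶ A') δ = 0 := by
  have h := hS.push_add (0 : A ⟶ A') 0 δ
  rw [add_zero] at h
  exact (add_eq_left.mp h.symm)

lemma pull_zero_mor (hS : S.IsET) {X' X A : C} (δ : S.Ext X A) :
    S.pull (0 : X' ⟶ X) δ = 0 := by
  have h := hS.pull_add (0 : X' ⟶ X) 0 δ
  rw [add_zero] at h
  exact (add_eq_left.mp h.symm)

lemma ext_zero_of_isZero_src (hS : S.IsET) {X A : C} (hA : IsZero A) (δ : S.Ext X A) :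
    δ = 0 := by
  calc δ = S.push (𝟙 A) δ := (push_id δ).symm
    _ = S.push (0 : A ⟶ A) δ := by rw [hA.eq_of_src (𝟙 A) 0]
    _ = 0 := push_zero_mor hS δ

lemma ext_zero_of_isZero_tgt (hS : S.IsET) {X A : C} (hX : IsZero X) (δ : S.Ext X A) :
    δ = 0 := by
  calc δ = S.pull (𝟙 X) δ := (pull_id δ).symm
    _ = S.pull (0 : X ⟶ X) δ := by rw [hX.eq_of_src (𝟙 X) 0]
    _ = 0 := pull_zero_mor hS δ

lemma realize_iso' (hS : S.IsET) {A B B' X : C} {f : A ⟶ B} {g : B ⟶ X} {δ : S.Ext X A}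
    (h : S.IsExtriangle f g δ) (hom : B ⟶ B') (inv : B' ⟶ B)
    (hhi : hom ≫ inv = 𝟙 B) (hih : inv ≫ hom = 𝟙 B') :
    S.IsExtriangle (f ≫ hom) (inv ≫ g) δ :=
  hS.realize_iso ⟨hom, inv, hhi, hih⟩ h

lemma extr_zero_left (hS : S.IsET) {Z W : C} (hZ : IsZero Z) :
    S.IsExtriangle (0 : Z ⟶ W) (𝟙 W) (0 : S.Ext W Z) := by
  have pf1 : (biprod.snd : Z ⊞ W ⟶ W) ≫ biprod.inr = 𝟙 (Z ⊞ W) := by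
    apply biprod.hom_ext
    · rw [Category.assoc, biprod.inr_fst, comp_zero, Category.id_comp]
      exact (hZ.eq_of_tgt _ _).symm
    · simp
  have h2 := realize_iso' hS (hS.realize_zero Z W) biprod.snd biprod.inr pf1 (by simp)
  simpa using h2

lemma extr_id_zero (hS : S.IsET) {Q Z : C} (hZ : IsZero Z) :
    S.IsExtriangle (𝟙 Q) (0 : Q ⟶ Z) (0 : S.Ext Z Q) := by
  have pf1 : (biprod.fst : Q ⊞ Z ⟶ Q) ≫ biprod.inl = 𝟙 (Q ⊞ Z) := by
    apply biprod.hom_ext'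
    · simp
    · rw [← Category.assoc, biprod.inr_fst, zero_comp, Category.comp_id]
      exact (hZ.eq_of_src _ _).symm
  have h2 := realize_iso' hS (hS.realize_zero Q Z) biprod.fst biprod.inl pf1 (by simp)
  simpa using h2

lemma comp_zero_of_extr (hS : S.IsET) {A B X : C} {f : A ⟶ B} {g : B ⟶ X} {δ : S.Ext X A}
    (h : S.IsExtriangle f g δ) : f ≫ g = 0 := by
  obtain ⟨a₀, ha, -⟩ := hS.et3op h
    (extr_zero_left hS (isZero_zero C) : S.IsExtriangle (0 : (0 : C) ⟶ X) (𝟙 X) 0)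
    g (𝟙 X) rfl
  simpa using ha

lemma factor_inflation (hS : S.IsET) {A B X T : C} {f : A ⟶ B} {g : B ⟶ X} {δ : S.Ext X A}
    (h : S.IsExtriangle f g δ) (φ : T ⟶ B) (hφ : φ ≫ g = 0) : ∃ ψ : T ⟶ A, ψ ≫ f = φ := by
  obtain ⟨ψ, hψ, -⟩ := hS.et3op
    (extr_id_zero hS (isZero_zero C) : S.IsExtriangle (𝟙 T) (0 : T ⟶ (0 : C)) 0) h
    φ 0 (by simp [hφ])
  exact ⟨ψ, by simpa using hψ.symm⟩

lemma factor_deflation (hS : S.IsET) {A B X W : C} {f : A ⟶ B} {g : B ⟶ X} {δ : S.Ext X A}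
    (h : S.IsExtriangle f g δ) (φ : B ⟶ W) (hφ : f ≫ φ = 0) : ∃ ψ : X ⟶ W, g ≫ ψ = φ := by
  obtain ⟨ψ, hψ, -⟩ := hS.et3 h
    (extr_zero_left hS (isZero_zero C) : S.IsExtriangle (0 : (0 : C) ⟶ W) (𝟙 W) 0)
    0 φ (by simp [hφ])
  exact ⟨ψ, by simpa using hψ⟩

lemma lift_deflation (hS : S.IsET) {A B X T : C} {f : A ⟶ B} {g : B ⟶ X} {δ : S.Ext X A}
    (h : S.IsExtriangle f g δ) (x : T ⟶ X) (hx : S.pull x δ = 0) : ∃ y : T ⟶ B, y ≫ g = x := by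
  obtain ⟨b, hb1, hb2⟩ := hS.realize_map (hS.realize_zero A T) h (𝟙 A) x
    (by rw [push_id, hx])
  refine ⟨biprod.inr ≫ b, ?_⟩
  rw [Category.assoc, hb2, ← Category.assoc]
  simp

lemma ext_vanish_of_extr (hS : S.IsET) {A B X T : C} {f : A ⟶ B} {g : B ⟶ X} {δ : S.Ext X A}
    (h : S.IsExtriangle f g δ)
    (hA : ∀ ε : S.Ext T A, ε = 0) (hX : ∀ ε : S.Ext T X, ε = 0) :
    ∀ ε : S.Ext T B, ε = 0 := by
  intro ε
  obtain ⟨N, m, e, hme⟩ := hS.realize_exists ε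
  obtain ⟨E₀, h₀, dd, e', δ'', hE1, hE2, h3, h4, h5, h6⟩ := hS.et4 h hme
  rw [hX (S.push g ε)] at hE2
  obtain ⟨u, hu1, hu2⟩ := hS.realize_unique hE2 (hS.realize_zero X T)
  have hinv : u.inv ≫ e' = biprod.snd := by rw [← hu2]; simp
  have hs : (biprod.inr ≫ u.inv) ≫ e' = 𝟙 T := by rw [Category.assoc, hinv]; simp
  calc ε = S.pull (𝟙 T) ε := (pull_id ε).symm
    _ = S.pull ((biprod.inr ≫ u.inv) ≫ e') ε := by rw [hs]
    _ = S.pull (biprod.inr ≫ u.inv) (S.pull e' ε) := pull_comp' _ _ _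
    _ = S.pull (biprod.inr ≫ u.inv) (S.push f δ'') := by rw [← h4]
    _ = S.push f (S.pull (biprod.inr ≫ u.inv) δ'') := (push_pull _ _ _).symm
    _ = S.push f 0 := by rw [hA (S.pull (biprod.inr ≫ u.inv) δ'')]
    _ = 0 := push_ext_zero f

lemma hom_vanish_of_extr (hS : S.IsET) {A B X W : C} {f : A ⟶ B} {g : B ⟶ X} {δ : S.Ext X A}
    (h : S.IsExtriangle f g δ)
    (hA : ∀ φ : A ⟶ W, φ = 0) (hX : ∀ ψ : X ⟶ W, ψ = 0) :
    ∀ φ : B ⟶ W, φ = 0 := by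
  intro φ
  obtain ⟨ψ, hψ⟩ := factor_deflation hS h φ (hA _)
  rw [← hψ, hX ψ, comp_zero]

end ETLemmas


/-! ### Chains and filtrations -/

section ChainLemmas

set_option linter.unusedSectionVars false

variable {C : Type u} [Category.{v} C] [Preadditive C] [HasZeroObject C] [HasFiniteBiproducts C]
variable {S : PreExt C}

lemma isExtriangle_congr {A B X A' B' X' : C} (hA : A' = A) (hB : B = B') (hX : X = X')
    {f : A ⟶ B} {g : B ⟶ X} {δ : S.Ext X A} (hext : S.IsExtriangle f g δ) :
    S.IsExtriangle (eqToHom hA ≫ f ≫ eqToHom hB) (eqToHom hB.symm ≫ g ≫ eqToHom hX)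
      (cast (by rw [hA, hX]) δ) := by
  subst hA; subst hB; subst hX
  simpa [cast_eq] using hext

/-- The trivial chain of length `0` at an object. -/
def zeroChain (S : PreExt C) (Z : C) : S.FChain 0 where
  obj := fun _ => Z
  factor := fun i => i.elim0
  f := fun i => i.elim0
  g := fun i => i.elim0
  δ := fun i => i.elim0
  ext := fun i => i.elim0

lemma zero_mem_filt {Z : C} (hZ : IsZero Z) (P : Set C) : Z ∈ S.Filt P :=
  ⟨0, zeroChain S Z, hZ, rfl, fun i => i.elim0⟩

/-- Truncation of a chain. -/
def truncChain {t : ℕ} (c : S.FChain t) (m : ℕ) (hm : m ≤ t) : S.FChain m where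
  obj k := c.obj ⟨k.1, by omega⟩
  factor k := c.factor ⟨k.1, by omega⟩
  f k := c.f ⟨k.1, by omega⟩
  g k := c.g ⟨k.1, by omega⟩
  δ k := c.δ ⟨k.1, by omega⟩
  ext k := c.ext ⟨k.1, by omega⟩

lemma obj_mem_filt {P : Set C} {t : ℕ} (c : S.FChain t) (h0 : IsZero (c.obj 0))
    (hfac : ∀ i, c.factor i ∈ P) (i : Fin (t + 1)) : c.obj i ∈ S.Filt P := by
  refine ⟨i.1, truncChain c i.1 (by omega), ?_, ?_, fun k => hfac _⟩
  · show IsZero (c.obj ⟨((0 : Fin (i.1 + 1))).1, by omega⟩)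
    convert h0 using 2
    all_goals exact Fin.ext (by simp)
  · show c.obj ⟨(Fin.last i.1).1, by omega⟩ = c.obj i
    congr 1
    all_goals exact Fin.ext (by simp)

lemma ext_vanish_filt (hS : S.IsET) {T : C} {P : Set C}
    (hP : ∀ p ∈ P, ∀ ε : S.Ext T p, ε = 0) {Y : C} (hY : Y ∈ S.Filt P) :
    ∀ ε : S.Ext T Y, ε = 0 := by
  obtain ⟨t, c, h0, htop, hfac⟩ := hY
  subst htop
  suffices H : ∀ i : Fin (t + 1), ∀ ε : S.Ext T (c.obj i), ε = 0 from H _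
  intro i
  induction i using Fin.induction with
  | zero => exact fun ε => ext_zero_of_isZero_src hS h0 ε
  | succ j ih => exact ext_vanish_of_extr hS (c.ext j) ih (hP _ (hfac j))

lemma hom_vanish_filt (hS : S.IsET) {W : C} {P : Set C}
    (hP : ∀ p ∈ P, ∀ φ : p ⟶ W, φ = 0) {Y : C} (hY : Y ∈ S.Filt P) :
    ∀ φ : Y ⟶ W, φ = 0 := by
  obtain ⟨t, c, h0, htop, hfac⟩ := hY
  subst htop
  suffices H : ∀ i : Fin (t + 1), ∀ φ : c.obj i ⟶ W, φ = 0 from H _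
  intro i
  induction i using Fin.induction with
  | zero => exact fun φ => h0.eq_of_src φ 0
  | succ j ih => exact hom_vanish_of_extr hS (c.ext j) ih (hP _ (hfac j))

lemma filt_mono {P P' : Set C} (h : P ⊆ P') : S.Filt P ⊆ S.Filt P' := by
  rintro M ⟨t, c, h0, htop, hfac⟩
  exact ⟨t, c, h0, htop, fun i => h (hfac i)⟩

/-- A length-one chain realising a single object. -/
noncomputable def oneChain (S : PreExt C) (hS : S.IsET) (W : C) : S.FChain 1 where
  obj k := if k.1 = 0 then (0 : C) else W
  factor := fun _ => W
  f i :=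
    eqToHom (if_pos (by simp only [Fin.coe_castSucc]; exact Nat.lt_one_iff.mp i.is_lt) :
        (if (Fin.castSucc i).1 = 0 then (0 : C) else W) = (0 : C)) ≫
      (0 : (0 : C) ⟶ W) ≫
      eqToHom ((if_neg (by simp only [Fin.val_succ]; omega) :
        (if (Fin.succ i).1 = 0 then (0 : C) else W) = W)).symm
  g i :=
    eqToHom ((if_neg (by simp only [Fin.val_succ]; omega) :
        (if (Fin.succ i).1 = 0 then (0 : C) else W) = W)).symm.symm ≫
      (𝟙 W) ≫ eqToHom (rfl : W = W)
  δ i :=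
    cast ((congrArg (S.Ext W)
      (if_pos (by simp only [Fin.coe_castSucc]; exact Nat.lt_one_iff.mp i.is_lt) :
        (if (Fin.castSucc i).1 = 0 then (0 : C) else W) = (0 : C))).symm)
      (0 : S.Ext W (0 : C))
  ext i :=
    isExtriangle_congr
      (if_pos (by simp only [Fin.coe_castSucc]; exact Nat.lt_one_iff.mp i.is_lt))
      ((if_neg (by simp only [Fin.val_succ]; omega) :
        (if (Fin.succ i).1 = 0 then (0 : C) else W) = W)).symm
      rfl (extr_zero_left hS (isZero_zero C))

lemma single_mem_filt (hS : S.IsET) {P : Set C} {W : C} (hW : W ∈ P) : W ∈ S.Filt P := by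
  refine ⟨1, oneChain S hS W, ?_, ?_, fun i => hW⟩
  · show IsZero (if ((0 : Fin 2)).1 = 0 then (0 : C) else W)
    rw [if_pos (by simp)]
    exact isZero_zero C
  · show (if (Fin.last 1).1 = 0 then (0 : C) else W) = W
    rw [if_neg (by simp)]

end ChainLemmas


section Statements

variable {C : Type u} [Category.{v} C] [Preadditive C] [HasZeroObject C] [HasFiniteBiproducts C]

variable (R : Type*) [CommRing R] [IsArtinianRing R] [CategoryTheory.Linear R C]
  [IsIdempotentComplete C]

theorem stmt18 (S : PreExt C) (hS : S.IsET) (art : ArtinLinear R S)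
    {n : ℕ} (Φ Q : Fin n → C) (hΦ : IsStratSys S Φ)
    (hps1 : ∀ i j : Fin n, ∀ δ : S.Ext (Q i) (Φ j), δ = 0)
    (d : ProjData S Φ Q) (hmin : ∀ i, RightMinimal (d.q i))
    (hle : ∀ i, S.HomLeftExactOn (Q i) (S.Filt (Set.range Φ)))
    (M : C) (t₁ t₂ : ℕ) (c₁ : S.FChain t₁) (c₂ : S.FChain t₂)
    (j₁ : Fin t₁ → Fin n) (j₂ : Fin t₂ → Fin n)
    (h₁0 : IsZero (c₁.obj 0)) (h₁top : c₁.obj (Fin.last t₁) = M)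
    (h₁fac : ∀ i, c₁.factor i = Φ (j₁ i))
    (h₂0 : IsZero (c₂.obj 0)) (h₂top : c₂.obj (Fin.last t₂) = M)
    (h₂fac : ∀ i, c₂.factor i = Φ (j₂ i)) :
    t₁ = t₂ ∧ ∃ e : Fin t₁ ≃ Fin t₂, ∀ i, j₁ i = j₂ (e i) := by
  classical
  -- abbreviation for the length of `Hom(Q i, X)`
  let len : Fin n → C → ℕ := fun i X => flen R (Q i ⟶ X) (art.homFinite (Q i) X)
  -- `E(Q i, -)` vanishes on filtered objects
  have extQ : ∀ (i : Fin n) {Y : C}, Y ∈ S.Filt (Set.range Φ) →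
      ∀ ε : S.Ext (Q i) Y, ε = 0 := by
    intro i Y hY
    refine ext_vanish_filt hS ?_ hY
    rintro p ⟨j, rfl⟩
    exact hps1 i j
  have hΦmem : ∀ p, Φ p ∈ S.Filt (Set.range Φ) := fun p => single_mem_filt hS ⟨p, rfl⟩
  have hKmem : ∀ i, d.K i ∈ S.Filt (Set.range Φ) := by
    intro i
    refine filt_mono ?_ (d.kmem i)
    rintro x ⟨j, hj, rfl⟩
    exact ⟨j, rfl⟩
  -- the morphisms q i are non-zero
  have hqne : ∀ i : Fin n, d.q i ≠ 0 := by
    have key : ∀ dd : ℕ, ∀ i : Fin n, n - i.1 ≤ dd → d.q i ≠ 0 := by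
      intro dd
      induction dd with
      | zero =>
        intro i hi
        exact absurd hi (by have := i.is_lt; omega)
      | succ dd ih =>
        intro i hi hq0
        have hQiso : IsIso (0 : Q i ⟶ Q i) := hmin i 0 (by rw [zero_comp, hq0])
        have hQzero : IsZero (Q i) := by
          rw [IsZero.iff_id_eq_zero]
          calc 𝟙 (Q i) = (0 : Q i ⟶ Q i) ≫ inv (0 : Q i ⟶ Q i) := (IsIso.hom_inv_id _).symm
            _ = 0 := zero_comp
        have hηne : d.η i ≠ 0 := by
          intro hη0
          have hext := d.ext i
          rw [hη0, hq0] at hext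
          obtain ⟨u, hu1, hu2⟩ := hS.realize_unique hext (hS.realize_zero (d.K i) (Φ i))
          have hsnd : (biprod.snd : d.K i ⊞ Φ i ⟶ Φ i) = 0 := by
            calc (biprod.snd : d.K i ⊞ Φ i ⟶ Φ i)
                = u.inv ≫ (u.hom ≫ biprod.snd) := by rw [← Category.assoc, u.inv_hom_id,
                    Category.id_comp]
              _ = u.inv ≫ 0 := by rw [hu2]
              _ = 0 := comp_zero
          have hid : 𝟙 (Φ i) = 0 := by rw [← biprod.inr_snd, hsnd, comp_zero]
          exact (hΦ.indec i).1 ((IsZero.iff_id_eq_zero _).mpr hid)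
        have hQmem : Q i ∈ S.Filt (Set.range Φ) := zero_mem_filt hQzero _
        have hKhom : ∀ (p : Fin n) (φ : Q p ⟶ d.K i), φ = 0 := by
          intro p φ
          exact hle p (d.K i) (Q i) (Φ i) (d.k i) (d.q i) (d.η i) (hKmem i) hQmem (hΦmem i)
            (d.ext i) φ 0 (hQzero.eq_of_tgt _ _)
        obtain ⟨t, ct, hc0, hctop, hcfac⟩ := d.kmem i
        cases t with
        | zero =>
          apply hηne
          apply ext_zero_of_isZero_src hS
          have hz : IsZero (ct.obj (Fin.last 0)) := by
            convert hc0 using 2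
            all_goals exact Fin.ext (by simp)
          rwa [hctop] at hz
        | succ s =>
          have hext := ct.ext (Fin.last s)
          have hsucc : ct.obj (Fin.last s).succ = d.K i := by
            rw [← hctop]
            congr 1
            all_goals exact Fin.ext (by simp)
          obtain ⟨jj, hjjlt, hjjeq⟩ := hcfac (Fin.last s)
          have hvlt : i.1 < jj.1 := hjjlt
          have hqjj : d.q jj = 0 := by
            have hx : S.pull (d.q jj ≫ eqToHom hjjeq) (ct.δ (Fin.last s)) = 0 := by
              apply extQ jj
              apply obj_mem_filt ct hc0
              intro k
              obtain ⟨jk, -, hjk⟩ := hcfac k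
              exact ⟨jk, hjk⟩
            obtain ⟨y, hy⟩ := lift_deflation hS hext (d.q jj ≫ eqToHom hjjeq) hx
            have hy0 : y = 0 := by
              have h00 := hKhom jj (y ≫ eqToHom hsucc)
              calc y = (y ≫ eqToHom hsucc) ≫ eqToHom hsucc.symm := by simp
                _ = 0 := by rw [h00, zero_comp]
            have hx0 : d.q jj ≫ eqToHom hjjeq = 0 := by rw [← hy, hy0, zero_comp]
            calc d.q jj = (d.q jj ≫ eqToHom hjjeq) ≫ eqToHom hjjeq.symm := by simp
              _ = 0 := by rw [hx0, zero_comp]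
          exact ih jj (by have := jj.is_lt; omega) hqjj
    exact fun i => key n i (by omega)
  -- Hom(Q i, Φ p) = 0 for p < i
  have hhom0 : ∀ i p : Fin n, p < i → ∀ φ : Q i ⟶ Φ p, φ = 0 := by
    intro i p hpi φ
    have hkφ : d.k i ≫ φ = 0 := by
      refine hom_vanish_filt hS (P := Φ '' {j | i < j}) ?_ (d.kmem i) _
      rintro x ⟨j, hj, rfl⟩ ψ
      exact hΦ.s1 p j (lt_trans hpi hj) ψ
    obtain ⟨ψ, hψ⟩ := factor_deflation hS (d.ext i) φ hkφ
    rw [← hψ, hΦ.s1 p i hpi ψ, comp_zero]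
  -- additivity of lengths along extriangles in F(Φ)
  have hses : ∀ (i : Fin n) {A B X : C} (a : A ⟶ B) (g : B ⟶ X) (δ : S.Ext X A),
      A ∈ S.Filt (Set.range Φ) → B ∈ S.Filt (Set.range Φ) → X ∈ S.Filt (Set.range Φ) →
      S.IsExtriangle a g δ → len i B = len i A + len i X := by
    intro i A B X a g δ hA hB hX hext
    refine flen_add (Linear.rightComp R (Q i) a) (Linear.rightComp R (Q i) g) ?_ ?_ ?_
      (art.homFinite (Q i) A) (art.homFinite (Q i) B) (art.homFinite (Q i) X)
    · intro φ ψ hfψ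
      exact hle i A B X a g δ hA hB hX hext φ ψ hfψ
    · intro x
      obtain ⟨y, hy⟩ := lift_deflation hS hext x (extQ i hA _)
      exact ⟨y, hy⟩
    · intro φ
      constructor
      · intro hφ
        obtain ⟨ψ, hψ⟩ := factor_inflation hS hext φ hφ
        exact ⟨ψ, hψ⟩
      · rintro ⟨ψ, rfl⟩
        show (ψ ≫ a) ≫ g = 0
        rw [Category.assoc, comp_zero_of_extr hS hext, comp_zero]
  -- computing lengths along a filtration
  have hchain : ∀ (i : Fin n) (t : ℕ) (c : S.FChain t) (j : Fin t → Fin n),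
      IsZero (c.obj 0) → (∀ k, c.factor k = Φ (j k)) →
      ∀ (m : ℕ) (hm : m ≤ t),
        len i (c.obj ⟨m, by omega⟩) =
          ∑ k ∈ Finset.range m, (if h : k < t then len i (Φ (j ⟨k, h⟩)) else 0) := by
    intro i t c j h0 hfac m
    induction m with
    | zero =>
      intro hm
      rw [Finset.sum_range_zero]
      apply flen_zero
      have hz : IsZero (c.obj ⟨0, by omega⟩) := by
        convert h0 using 2
        all_goals exact Fin.ext (by simp)
      exact ⟨fun a b => hz.eq_of_tgt a b⟩
    | succ m ihm =>
      intro hm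
      have hm' : m ≤ t := by omega
      have hk : m < t := by omega
      have hmemfac : c.factor ⟨m, hk⟩ ∈ S.Filt (Set.range Φ) := by
        rw [hfac ⟨m, hk⟩]; exact hΦmem _
      have hstep := hses i (c.f ⟨m, hk⟩) (c.g ⟨m, hk⟩) (c.δ ⟨m, hk⟩)
        (obj_mem_filt (P := Set.range Φ) c h0 (fun k => ⟨j k, (hfac k).symm⟩) _)
        (obj_mem_filt (P := Set.range Φ) c h0 (fun k => ⟨j k, (hfac k).symm⟩) _)
        hmemfac (c.ext ⟨m, hk⟩)
      rw [hfac ⟨m, hk⟩] at hstep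
      rw [Finset.sum_range_succ, dif_pos hk, ← ihm hm']
      exact hstep
  -- fiberwise summation
  have hfib : ∀ (t : ℕ) (j : Fin t → Fin n) (F : Fin n → ℕ),
      ∑ k : Fin t, F (j k) =
        ∑ p : Fin n, (Finset.univ.filter (fun k => j k = p)).card * F p := by
    intro t j F
    rw [← Finset.sum_fiberwise' Finset.univ j F]
    refine Finset.sum_congr rfl fun p _ => ?_
    rw [Finset.sum_const, smul_eq_mul]
  -- total length of M along each chain
  have htot : ∀ (t : ℕ) (c : S.FChain t) (j : Fin t → Fin n),
      IsZero (c.obj 0) → c.obj (Fin.last t) = M → (∀ k, c.factor k = Φ (j k)) →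
      ∀ i : Fin n, len i M =
        ∑ p : Fin n, (Finset.univ.filter (fun k => j k = p)).card * len i (Φ p) := by
    intro t c j h0 htop hfac i
    have e0 := hchain i t c j h0 hfac t le_rfl
    rw [show c.obj ⟨t, by omega⟩ = M from htop] at e0
    rw [e0, ← hfib t j (fun p => len i (Φ p)), ← Fin.sum_univ_eq_sum_range]
    refine Finset.sum_congr rfl fun k _ => ?_
    rw [dif_pos k.2]
  have h1tot := htot t₁ c₁ j₁ h₁0 h₁top h₁fac
  have h2tot := htot t₂ c₂ j₂ h₂0 h₂top h₂fac
  -- multiplicities agree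
  have hdiag : ∀ p : Fin n, 0 < len p (Φ p) :=
    fun p => flen_pos _ ⟨d.q p, 0, hqne p⟩
  have hlow : ∀ i p : Fin n, p < i → len i (Φ p) = 0 :=
    fun i p hpi => flen_zero _ ⟨fun a b => by rw [hhom0 i p hpi a, hhom0 i p hpi b]⟩
  have hmm : ∀ p : Fin n,
      (Finset.univ.filter (fun k : Fin t₁ => j₁ k = p)).card =
      (Finset.univ.filter (fun k : Fin t₂ => j₂ k = p)).card := by
    have key : ∀ dd : ℕ, ∀ p : Fin n, n - p.1 ≤ dd →
        (Finset.univ.filter (fun k : Fin t₁ => j₁ k = p)).card =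
        (Finset.univ.filter (fun k : Fin t₂ => j₂ k = p)).card := by
      intro dd
      induction dd with
      | zero =>
        intro p hp
        exact absurd hp (by have := p.is_lt; omega)
      | succ dd ih =>
        intro p hp
        have heq := (h1tot p).symm.trans (h2tot p)
        rw [← Finset.add_sum_erase _ _ (Finset.mem_univ p),
          ← Finset.add_sum_erase _ _ (Finset.mem_univ p)] at heq
        have hrest : ∑ q ∈ Finset.univ.erase p,
              (Finset.univ.filter (fun k : Fin t₁ => j₁ k = q)).card * len p (Φ q)
            = ∑ q ∈ Finset.univ.erase p,
              (Finset.univ.filter (fun k : Fin t₂ => j₂ k = q)).card * len p (Φ q) := by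
          refine Finset.sum_congr rfl fun q hq => ?_
          rcases lt_or_gt_of_ne (Finset.ne_of_mem_erase hq) with h | h
          · rw [hlow p q h, Nat.mul_zero, Nat.mul_zero]
          · have hv : p.1 < q.1 := h
            rw [ih q (by have := q.is_lt; omega)]
        rw [hrest] at heq
        have hc := Nat.add_right_cancel heq
        exact Nat.eq_of_mul_eq_mul_right (hdiag p) hc
    exact fun p => key n p (by omega)
  -- build the bijection
  have hcard : ∀ p : Fin n,
      Fintype.card {k : Fin t₁ // j₁ k = p} = Fintype.card {k : Fin t₂ // j₂ k = p} := by
    intro p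
    rw [Fintype.card_subtype, Fintype.card_subtype]
    exact hmm p
  have fib : ∀ p, {k : Fin t₁ // j₁ k = p} ≃ {k : Fin t₂ // j₂ k = p} :=
    fun p => Fintype.equivOfCardEq (hcard p)
  refine ⟨?_, ⟨(Equiv.sigmaFiberEquiv j₁).symm.trans
    ((Equiv.sigmaCongrRight fib).trans (Equiv.sigmaFiberEquiv j₂)), fun k => ?_⟩⟩
  · have := Fintype.card_congr ((Equiv.sigmaFiberEquiv j₁).symm.trans
      ((Equiv.sigmaCongrRight fib).trans (Equiv.sigmaFiberEquiv j₂)))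
    simpa using this
  · exact ((fib (j₁ k)) ⟨k, rfl⟩).2.symm

end Statements

end ExtriPaper
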